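/- Let q ≥ 0, r ≥ 1, N ≥ 1 and D ≥ 1 be integers. Then | Σ_{l=0}^{N} (1 − (l/N)^{r(q+1)})^D − (N/(r(q+1)))·B(D+1, 1/(r(q+1))) | ≤ 1, where B(a,b) = Γ(a)Γ(b)/Γ(a+b) is the Beta function and Γ is the real Gamma function. Consequently, the expected data persistency of random replicated erasure codes REC(1, 1+q, r) with N nodes and D documents equals (N/(r(q+1)))·B(D+1, 1/(r(q+1))) up to an error of absolute value at most 1. -/

import Mathlib

/-- The Beta function `B(a,b) = Γ(a)·Γ(b)/Γ(a+b)` for real `a, b`. -/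
noncomputable def betaFun (a b : ℝ) : ℝ :=
  Real.Gamma a * Real.Gamma b / Real.Gamma (a + b)

private lemma prod_pos' (n : ℕ) {x : ℝ} (hx : 0 < x) :
    0 < ∏ j ∈ Finset.range n, (x + (j : ℝ)) :=
  Finset.prod_pos fun j _ => by positivity

/-- Partial fraction identity. -/
private lemma partial_fraction (n : ℕ) : ∀ x : ℝ, 0 < x →
    ∑ k ∈ Finset.range (n + 1), (-1 : ℝ) ^ k * (n.choose k : ℝ) / (x + k)
      = (n.factorial : ℝ) / ∏ j ∈ Finset.range (n + 1), (x + (j : ℝ)) := by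
  induction n with
  | zero => intro x hx; simp
  | succ n ih =>
    intro x hx
    have hx1 : (0 : ℝ) < x + 1 := by linarith
    set P : ℝ := ∏ j ∈ Finset.range (n + 1), (x + (j : ℝ)) with hPdef
    set Q : ℝ := ∏ j ∈ Finset.range (n + 1), ((x + 1) + (j : ℝ)) with hQdef
    set R : ℝ := ∏ j ∈ Finset.range (n + 2), (x + (j : ℝ)) with hRdef
    have hP : (0 : ℝ) < P := prod_pos' _ hx
    have hQ : (0 : ℝ) < Q := prod_pos' _ hx1
    have hR : (0 : ℝ) < R := prod_pos' _ hx
    have hR1 : R = P * (x + ((n : ℝ) + 1)) := by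
      rw [hRdef, Finset.prod_range_succ]; push_cast; ring
    have hR2 : R = x * Q := by
      have hQ' : ∏ k ∈ Finset.range (n+1), (x + ((k+1 : ℕ) : ℝ)) = Q :=
        Finset.prod_congr rfl fun j _ => by push_cast; ring
      rw [hRdef, Finset.prod_range_succ', hQ']
      push_cast; ring
    have key : ∑ k ∈ Finset.range (n + 2), (-1 : ℝ) ^ k * ((n+1).choose k : ℝ) / (x + k)
        = (∑ k ∈ Finset.range (n + 1), (-1 : ℝ) ^ k * (n.choose k : ℝ) / (x + k))
          - ∑ k ∈ Finset.range (n + 1), (-1 : ℝ) ^ k * (n.choose k : ℝ) / ((x + 1) + k) := by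
      rw [Finset.sum_range_succ' (fun k => (-1 : ℝ) ^ k * ((n+1).choose k : ℝ) / (x + k))]
      have hsplit : ∀ k : ℕ,
          (-1 : ℝ) ^ (k+1) * ((n+1).choose (k+1) : ℝ) / (x + (k+1 : ℕ))
            = (-1 : ℝ) ^ (k+1) * (n.choose (k+1) : ℝ) / (x + ((k+1 : ℕ) : ℝ))
              + (-((-1 : ℝ) ^ k * (n.choose k : ℝ) / ((x + 1) + k))) := by
        intro k
        have hc : ((n+1).choose (k+1) : ℝ) = (n.choose (k+1) : ℝ) + (n.choose k : ℝ) := by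
          rw [Nat.choose_succ_succ]; push_cast; ring
        have hne : x + ((k : ℝ) + 1) ≠ 0 := by positivity
        have h2 : (x + 1) + (k : ℝ) ≠ 0 := by positivity
        rw [hc]
        push_cast
        field_simp
        ring
      rw [Finset.sum_congr rfl (fun k _ => hsplit k), Finset.sum_add_distrib]
      rw [Finset.sum_neg_distrib]
      have hfirst : (∑ k ∈ Finset.range (n + 1),
            (-1 : ℝ) ^ (k+1) * (n.choose (k+1) : ℝ) / (x + ((k+1 : ℕ) : ℝ)))
            + (-1 : ℝ) ^ 0 * ((n+1).choose 0 : ℝ) / (x + (0 : ℕ))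
          = ∑ k ∈ Finset.range (n + 1), (-1 : ℝ) ^ k * (n.choose k : ℝ) / (x + k) := by
        have h0 : ((-1 : ℝ) ^ 0 * ((n+1).choose 0 : ℝ) / (x + ((0 : ℕ) : ℝ)))
            = (-1 : ℝ) ^ 0 * (n.choose 0 : ℝ) / (x + ((0 : ℕ) : ℝ)) := by simp
        rw [h0, ← Finset.sum_range_succ' (fun k => (-1 : ℝ) ^ k * (n.choose k : ℝ) / (x + k))]
        rw [Finset.sum_range_succ]
        simp [Nat.choose_succ_self]
      push_cast at hfirst ⊢
      linarith [hfirst]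
    rw [key, ih x hx, ih (x + 1) hx1]
    rw [div_sub_div _ _ (ne_of_gt hP) (ne_of_gt hQ),
        div_eq_div_iff (by positivity) (ne_of_gt hR)]
    have hfact : ((n+1).factorial : ℝ) = ((n : ℝ) + 1) * (n.factorial : ℝ) := by
      rw [Nat.factorial_succ]; push_cast; ring
    rw [hfact]
    linear_combination ((n.factorial : ℝ) * Q) * hR1 - ((n.factorial : ℝ) * P) * hR2

/-- Gamma shift by a natural number. -/
private lemma Gamma_add_nat {x : ℝ} (hx : 0 < x) (n : ℕ) :
    Real.Gamma (x + n) = (∏ j ∈ Finset.range n, (x + (j : ℝ))) * Real.Gamma x := by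
  induction n with
  | zero => simp
  | succ n ih =>
    have hxn : x + (n : ℝ) ≠ 0 := by positivity
    have : x + ((n : ℕ) + 1 : ℕ) = (x + (n : ℝ)) + 1 := by push_cast; ring
    rw [this, Real.Gamma_add_one hxn, ih, Finset.prod_range_succ]
    ring

/-- Value of the Beta function at a natural first argument shift. -/
private lemma betaFun_nat {s : ℝ} (hs : 0 < s) (D : ℕ) :
    betaFun ((D : ℝ) + 1) s
      = (D.factorial : ℝ) / ∏ j ∈ Finset.range (D + 1), (s + (j : ℝ)) := by
  have hG : Real.Gamma ((D : ℝ) + 1) = (D.factorial : ℝ) := Real.Gamma_nat_eq_factorial D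
  have hshift : Real.Gamma ((D : ℝ) + 1 + s)
      = (∏ j ∈ Finset.range (D + 1), (s + (j : ℝ))) * Real.Gamma s := by
    rw [show ((D : ℝ) + 1 + s) = s + ((D + 1 : ℕ) : ℝ) by push_cast; ring]
    exact Gamma_add_nat hs (D + 1)
  have hGs : 0 < Real.Gamma s := Real.Gamma_pos_of_pos hs
  have hprod : 0 < ∏ j ∈ Finset.range (D + 1), (s + (j : ℝ)) := prod_pos' _ hs
  rw [betaFun, hG, hshift]
  field_simp

theorem stmt16 (q r N D : ℕ) (hr : 1 ≤ r) (hN : 1 ≤ N) (hD : 1 ≤ D) :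
    |(∑ l ∈ Finset.range (N + 1),
        ((1 : ℝ) - ((l : ℝ) / (N : ℝ)) ^ (r * (q + 1))) ^ D) -
      ((N : ℝ) / ((r : ℝ) * ((q : ℝ) + 1))) *
        betaFun ((D : ℝ) + 1) (1 / ((r : ℝ) * ((q : ℝ) + 1)))| ≤ 1 := by
  set m : ℕ := r * (q + 1) with hm
  have hm1 : 1 ≤ m := Nat.one_le_iff_ne_zero.mpr (by positivity)
  have hM : (0 : ℝ) < (m : ℝ) := by exact_mod_cast Nat.lt_of_lt_of_le Nat.zero_lt_one hm1
  have hMcast : ((r : ℝ) * ((q : ℝ) + 1)) = (m : ℝ) := by push_cast [hm]; ring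
  set s : ℝ := 1 / (m : ℝ) with hs
  have hs0 : 0 < s := by positivity
  have hNR : (0 : ℝ) < (N : ℝ) := by exact_mod_cast hN
  -- the integrand
  set f : ℝ → ℝ := fun x => (1 - x ^ m) ^ D with hf
  -- Step 1: compute the integral of f over [0,1]
  have hexp : ∀ x : ℝ, f x = ∑ k ∈ Finset.range (D + 1),
      (-1 : ℝ) ^ k * (D.choose k : ℝ) * x ^ (m * k) := by
    intro x
    have := add_pow (-(x ^ m)) 1 D
    rw [hf]
    simp only []
    rw [show (1 : ℝ) - x ^ m = -(x ^ m) + 1 by ring, this]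
    refine Finset.sum_congr rfl fun k _ => ?_
    rw [neg_pow, one_pow, pow_mul]
    ring
  have hint : ∫ x in (0:ℝ)..1, f x
      = ∑ k ∈ Finset.range (D + 1), (-1 : ℝ) ^ k * (D.choose k : ℝ) / ((m : ℝ) * k + 1) := by
    rw [intervalIntegral.integral_congr (g := fun x => ∑ k ∈ Finset.range (D + 1),
        (-1 : ℝ) ^ k * (D.choose k : ℝ) * x ^ (m * k)) (fun x _ => hexp x)]
    rw [intervalIntegral.integral_finset_sum]
    · refine Finset.sum_congr rfl fun k _ => ?_
      rw [intervalIntegral.integral_const_mul, integral_pow]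
      rw [one_pow, zero_pow (by positivity)]
      push_cast
      ring
    · intro k _
      exact (Continuous.intervalIntegrable (by fun_prop) _ _)
  have hintval : ∫ x in (0:ℝ)..1, f x = s * betaFun ((D : ℝ) + 1) s := by
    rw [hint, betaFun_nat hs0 D, ← partial_fraction D s hs0, Finset.mul_sum]
    refine Finset.sum_congr rfl fun k _ => ?_
    have h1 : s + (k : ℝ) = ((m : ℝ) * k + 1) / (m : ℝ) := by
      field_simp [hs]
      rw [hs, one_div, add_mul, inv_mul_cancel₀ hM.ne']
      ring
    have h2 : ((m : ℝ) * k + 1) ≠ 0 := by positivity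
    rw [h1, hs]
    field_simp
  -- Step 2: relate the sum to the integral over [0, N]
  set g : ℝ → ℝ := fun t => f (t / N) with hg
  have hanti : AntitoneOn g (Set.Icc (0:ℝ) (0 + (N:ℕ))) := by
    intro a ha b hb hab
    simp only [zero_add] at ha hb
    have ha0 : 0 ≤ a / N := div_nonneg ha.1 hNR.le
    have hb0 : 0 ≤ b / N := div_nonneg hb.1 hNR.le
    have hb1 : b / N ≤ 1 := (div_le_one hNR).mpr hb.2
    have hdiv : a / N ≤ b / N := by gcongr
    have hpow : (a / N) ^ m ≤ (b / N) ^ m := pow_le_pow_left₀ ha0 hdiv m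
    have hple : (b / N) ^ m ≤ 1 := pow_le_one₀ hb0 hb1
    rw [hg, hf]
    exact pow_le_pow_left₀ (by linarith) (by linarith) D
  have hup : (∑ i ∈ Finset.range N, g (0 + ((i + 1 : ℕ) : ℝ))) ≤ ∫ x in (0:ℝ)..(0 + (N:ℕ)), g x :=
    AntitoneOn.sum_le_integral hanti
  have hlo : (∫ x in (0:ℝ)..(0 + (N:ℕ)), g x) ≤ ∑ i ∈ Finset.range N, g (0 + (i : ℕ)) :=
    AntitoneOn.integral_le_sum hanti
  simp only [zero_add] at hup hlo
  -- integral over [0,N] equals N times integral over [0,1]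
  have hscale : (∫ x in (0:ℝ)..(N:ℕ), g x) = (N : ℝ) * ∫ x in (0:ℝ)..1, f x := by
    rw [hg]
    rw [intervalIntegral.integral_comp_div f (ne_of_gt hNR)]
    rw [zero_div, div_self (ne_of_gt hNR)]
    simp [smul_eq_mul]
  -- the sum in the statement equals sum over g
  have hsum : (∑ l ∈ Finset.range (N + 1),
        ((1 : ℝ) - ((l : ℝ) / (N : ℝ)) ^ (r * (q + 1))) ^ D)
      = ∑ l ∈ Finset.range (N + 1), g (l : ℝ) := by
    refine Finset.sum_congr rfl fun l _ => ?_
    rw [hg, hf]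
  have hgN : g ((N : ℕ) : ℝ) = 0 := by
    rw [hg, hf]
    simp only []
    rw [div_self (ne_of_gt hNR), one_pow, sub_self, zero_pow (by omega)]
  have hg0 : g 0 = 1 := by
    rw [hg, hf]
    simp only []
    rw [zero_div, zero_pow (by omega), sub_zero, one_pow]
  set S : ℝ := ∑ l ∈ Finset.range (N + 1), g (l : ℝ) with hS
  have hSlow : (∫ x in (0:ℝ)..(N:ℕ), g x) ≤ S := by
    have hs2 : S = (∑ i ∈ Finset.range N, g ((i : ℕ) : ℝ)) + g ((N : ℕ) : ℝ) := by
      rw [hS, Finset.sum_range_succ]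
    rw [hs2, hgN, add_zero]
    exact hlo
  have hShigh : S ≤ (∫ x in (0:ℝ)..(N:ℕ), g x) + 1 := by
    have hs2 : S = (∑ i ∈ Finset.range N, g (((i + 1 : ℕ)) : ℝ)) + g ((0 : ℕ) : ℝ) := by
      rw [hS, Finset.sum_range_succ' (fun l : ℕ => g (l : ℝ))]
    have hg0' : g ((0 : ℕ) : ℝ) = 1 := by rw [Nat.cast_zero, hg0]
    rw [hs2, hg0']
    linarith
  -- Final assembly
  have hcoef : ((N : ℝ) / ((r : ℝ) * ((q : ℝ) + 1))) * betaFun ((D : ℝ) + 1)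
      (1 / ((r : ℝ) * ((q : ℝ) + 1))) = ∫ x in (0:ℝ)..(N:ℕ), g x := by
    rw [hscale, hintval, hMcast, ← hs]
    ring
  rw [abs_le]
  constructor
  · linarith
  · linarith
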